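/- Let λ₁⁺, λ₁⁻, λ₂, λ₃, μ₂, μ₃ > 0, Λ := λ₁⁺ + λ₁⁻, δ := λ₁⁺/Λ, ρ₂ := λ₂/μ₂, ρ₃ := λ₃/μ₃, and E_P := δ·ρ₂·ρ₃. Then E_P + λ₂·ρ₃²·δ·∫₀^∞[∫₀^∞(e^{-μ₃·max(s−t,0)} − e^{-μ₃·s})² ds]·μ₂·e^{-μ₂·t} dt + ρ₂²·ρ₃²·δ·(1−δ)·∫_{ℝ₊⁴} e^{-Λ·|(u₁−u₂)+(v₁−v₂)|}·μ₂²·μ₃²·e^{-μ₂(u₁+u₂)}·e^{-μ₃(v₁+v₂)} du₁du₂dv₁dv₂ = E_P·(1 + λ₃/(μ₂+μ₃) + λ₂·λ₃·(1−δ)·(Λ+μ₂+μ₃)/((μ₂+μ₃)·(Λ+μ₂)·(Λ+μ₃))). That is, when both the mRNA and protein lifetimes are exponentially distributed (parameters μ₂ and μ₃), the general integral formula for the variance of the number of proteins at equilibrium reduces to the classical closed form var_E(P). -/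

import Mathlib

open Real MeasureTheory Set Filter

lemma tendNeg (b : ℝ) (hb : 0 < b) : Tendsto (fun x => Real.exp (-(b*x))) atTop (nhds 0) := by
  have h1 : Tendsto (fun x : ℝ => b * x) atTop atTop := Tendsto.const_mul_atTop hb tendsto_id
  have := Real.tendsto_exp_neg_atTop_nhds_zero.comp h1
  exact this

lemma expDeriv (b : ℝ) (hb : b ≠ 0) (x : ℝ) :
    HasDerivAt (fun x => -Real.exp (-(b*x)) / b) (Real.exp (-(b*x))) x := by
  have h : HasDerivAt (fun x => -(b*x)) (-b) x := by
    exact ((hasDerivAt_id x).const_mul b).neg.congr_deriv (by simp)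
  have := (h.exp).neg.div_const b
  refine this.congr_deriv ?_
  field_simp

lemma expIntOn (b a : ℝ) (hb : 0 < b) :
    IntegrableOn (fun x => Real.exp (-(b*x))) (Ioi a) := by
  simpa [neg_mul] using exp_neg_integrableOn_Ioi a hb

lemma expInt (b a : ℝ) (hb : 0 < b) :
    ∫ x in Ioi a, Real.exp (-(b*x)) = Real.exp (-(b*a)) / b := by
  have htend : Tendsto (fun x => -Real.exp (-(b*x)) / b) atTop (nhds 0) := by
    simpa using ((tendNeg b hb).neg.div_const b)
  have := integral_Ioi_of_hasDerivAt_of_tendsto' (f := fun x => -Real.exp (-(b*x)) / b)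
    (fun x _ => expDeriv b hb.ne' x) (expIntOn b a hb) htend
  rw [this]; ring

lemma texpDeriv (b : ℝ) (hb : 0 < b) (x : ℝ) :
    HasDerivAt (fun x => -((x/b + 1/b^2) * Real.exp (-(b*x)))) (x * Real.exp (-(b*x))) x := by
  have h : HasDerivAt (fun x => -(b*x)) (-b) x := by
    exact ((hasDerivAt_id x).const_mul b).neg.congr_deriv (by simp)
  have h2 : HasDerivAt (fun x : ℝ => x/b + 1/b^2) (1/b) x := by
    have := ((hasDerivAt_id x).div_const b).add_const (1/b^2)
    simpa [one_div] using this
  have := ((h2.mul h.exp)).neg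
  refine this.congr_deriv ?_
  field_simp
  ring

lemma texpTend (b : ℝ) (hb : 0 < b) :
    Tendsto (fun x => -((x/b + 1/b^2) * Real.exp (-(b*x)))) atTop (nhds 0) := by
  have hA : Tendsto (fun x : ℝ => x * Real.exp (-(b*x))) atTop (nhds 0) := by
    have := tendsto_rpow_mul_exp_neg_mul_atTop_nhds_zero 1 b hb
    refine this.congr' ?_
    filter_upwards [eventually_ge_atTop (0:ℝ)] with x hx
    rw [Real.rpow_one, neg_mul]
  have h1 : Tendsto (fun x : ℝ => (x/b + 1/b^2) * Real.exp (-(b*x))) atTop (nhds 0) := by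
    have : (fun x : ℝ => (x/b + 1/b^2) * Real.exp (-(b*x)))
        = fun x : ℝ => (1/b) * (x * Real.exp (-(b*x))) + (1/b^2) * Real.exp (-(b*x)) := by
      funext x; ring
    rw [this]
    have h2 := ((hA.const_mul (1/b)).add ((tendNeg b hb).const_mul (1/b^2)))
    simp only [one_div] at h2
    simpa using h2
  simpa using h1.neg

lemma texpIntOn (b : ℝ) (hb : 0 < b) :
    IntegrableOn (fun x => x * Real.exp (-(b*x))) (Ioi 0) := by
  refine integrableOn_Ioi_deriv_of_nonneg' (g := fun x => -((x/b + 1/b^2) * Real.exp (-(b*x))))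
    (fun x _ => texpDeriv b hb x) ?_ (texpTend b hb)
  intro x hx
  exact mul_nonneg (le_of_lt hx) (Real.exp_pos _).le

lemma texpInt (b : ℝ) (hb : 0 < b) :
    ∫ x in Ioi (0:ℝ), x * Real.exp (-(b*x)) = 1/b^2 := by
  have := integral_Ioi_of_hasDerivAt_of_tendsto' (f := fun x => -((x/b + 1/b^2) * Real.exp (-(b*x))))
    (fun x _ => texpDeriv b hb x) (texpIntOn b hb) (texpTend b hb)
  rw [this]; simp

lemma innerA (mu3 : ℝ) (h3 : 0 < mu3) (t : ℝ) (ht : 0 < t) :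
    ∫ s in Ioi (0:ℝ), (Real.exp (-(mu3 * max (s - t) 0)) - Real.exp (-(mu3 * s)))^2
      = t - (1 - Real.exp (-(mu3*t)))/mu3 := by
  have hsplit : Ioc (0:ℝ) t ∪ Ioi t = Ioi 0 := Ioc_union_Ioi_eq_Ioi ht.le
  have hcont : Continuous (fun s : ℝ => (Real.exp (-(mu3 * max (s - t) 0)) - Real.exp (-(mu3 * s)))^2) := by
    fun_prop
  have hint1 : IntegrableOn (fun s : ℝ => (Real.exp (-(mu3 * max (s - t) 0)) - Real.exp (-(mu3 * s)))^2) (Ioc 0 t) :=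
    hcont.integrableOn_Ioc
  have heq2 : EqOn (fun s : ℝ => (Real.exp (-(mu3 * max (s - t) 0)) - Real.exp (-(mu3 * s)))^2)
      (fun s : ℝ => (Real.exp (mu3*t) - 1)^2 * Real.exp (-(2*mu3*s))) (Ioi t) := by
    intro s hs
    simp only [Ioi, mem_setOf_eq] at hs
    have hmax : max (s - t) 0 = s - t := max_eq_left (by linarith)
    simp only [hmax]
    have : Real.exp (-(mu3 * (s - t))) - Real.exp (-(mu3 * s))
        = (Real.exp (mu3*t) - 1) * Real.exp (-(mu3 * s)) := by
      rw [sub_mul, ← Real.exp_add, one_mul]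
      ring_nf
    rw [this, mul_pow, ← Real.exp_nat_mul]
    ring_nf
  have hint2 : IntegrableOn (fun s : ℝ => (Real.exp (-(mu3 * max (s - t) 0)) - Real.exp (-(mu3 * s)))^2) (Ioi t) := by
    refine (IntegrableOn.congr_fun ?_ heq2.symm measurableSet_Ioi)
    exact (expIntOn (2*mu3) t (by linarith)).const_mul _
  rw [← hsplit, setIntegral_union (Ioc_disjoint_Ioi le_rfl) measurableSet_Ioi hint1 hint2]
  have hP1 : ∫ s in Ioc (0:ℝ) t, (Real.exp (-(mu3 * max (s - t) 0)) - Real.exp (-(mu3 * s)))^2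
      = t + 2*Real.exp (-(mu3*t))/mu3 - Real.exp (-(2*mu3*t))/(2*mu3) - (2/mu3 - 1/(2*mu3)) := by
    rw [← intervalIntegral.integral_of_le ht.le]
    have heq1 : ∀ s ∈ uIcc (0:ℝ) t, (Real.exp (-(mu3 * max (s - t) 0)) - Real.exp (-(mu3 * s)))^2
        = 1 - 2*Real.exp (-(mu3*s)) + Real.exp (-(2*mu3*s)) := by
      intro s hs
      rw [uIcc_of_le ht.le] at hs
      have hmax : max (s - t) 0 = 0 := max_eq_right (by linarith [hs.2])
      rw [hmax]
      rw [show -(2*mu3*s) = -(mu3*s) + -(mu3*s) by ring, Real.exp_add]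
      simp; ring
    rw [intervalIntegral.integral_congr heq1]
    have hderiv : ∀ s ∈ uIcc (0:ℝ) t, HasDerivAt
        (fun s => s + 2*Real.exp (-(mu3*s))/mu3 - Real.exp (-(2*mu3*s))/(2*mu3))
        (1 - 2*Real.exp (-(mu3*s)) + Real.exp (-(2*mu3*s))) s := by
      intro s _
      have e1 : HasDerivAt (fun s : ℝ => -(mu3*s)) (-mu3) s := by
        exact ((hasDerivAt_id s).const_mul mu3).neg.congr_deriv (by simp)
      have e2 : HasDerivAt (fun s : ℝ => -(2*mu3*s)) (-(2*mu3)) s := by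
        exact ((hasDerivAt_id s).const_mul (2*mu3)).neg.congr_deriv (by simp)
      have := (((hasDerivAt_id s).add (((e1.exp.const_mul 2).div_const mu3))).sub
        ((e2.exp).div_const (2*mu3)))
      refine this.congr_deriv ?_
      field_simp
      ring
    have hii : IntervalIntegrable (fun s : ℝ => 1 - 2*Real.exp (-(mu3*s)) + Real.exp (-(2*mu3*s))) volume 0 t := by
      apply Continuous.intervalIntegrable; fun_prop
    rw [intervalIntegral.integral_eq_sub_of_hasDerivAt hderiv hii]
    simp
    try ring
  have hP2 : ∫ s in Ioi t, (Real.exp (-(mu3 * max (s - t) 0)) - Real.exp (-(mu3 * s)))^2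
      = (1 - Real.exp (-(mu3*t)))^2/(2*mu3) := by
    rw [setIntegral_congr_fun measurableSet_Ioi heq2, integral_const_mul,
      expInt (2*mu3) t (by linarith)]
    have h1 : (Real.exp (mu3*t) - 1) * Real.exp (-(mu3*t)) = 1 - Real.exp (-(mu3*t)) := by
      rw [sub_mul, ← Real.exp_add]; simp
    have h2 : Real.exp (-(2*mu3*t)) = Real.exp (-(mu3*t))^2 := by
      rw [← Real.exp_nat_mul]; ring_nf
    rw [h2]
    rw [show (Real.exp (mu3*t) - 1)^2 * (Real.exp (-(mu3*t))^2 / (2*mu3))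
        = ((Real.exp (mu3*t) - 1) * Real.exp (-(mu3*t)))^2 / (2*mu3) by ring, h1]
  rw [hP1, hP2]
  have h2 : Real.exp (-(2*mu3*t)) = Real.exp (-(mu3*t))^2 := by
    rw [← Real.exp_nat_mul]; ring_nf
  rw [h2]
  field_simp
  ring

lemma partA (mu2 mu3 : ℝ) (h2 : 0 < mu2) (h3 : 0 < mu3) :
    ∫ t in Ioi (0:ℝ),
      (∫ s in Ioi (0:ℝ), (Real.exp (-(mu3 * max (s - t) 0)) - Real.exp (-(mu3 * s)))^2)
        * (mu2 * Real.exp (-(mu2 * t)))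
    = 1/mu2 - 1/(mu2+mu3) := by
  have hcong : EqOn (fun t : ℝ =>
      (∫ s in Ioi (0:ℝ), (Real.exp (-(mu3 * max (s - t) 0)) - Real.exp (-(mu3 * s)))^2)
        * (mu2 * Real.exp (-(mu2 * t))))
      (fun t : ℝ => mu2*(t*Real.exp (-(mu2*t))) - (mu2/mu3)*Real.exp (-(mu2*t))
        + (mu2/mu3)*Real.exp (-((mu2+mu3)*t))) (Ioi 0) := by
    intro t htp
    simp only
    rw [innerA mu3 h3 t htp]
    have hE : Real.exp (-((mu2+mu3)*t)) = Real.exp (-(mu2*t)) * Real.exp (-(mu3*t)) := by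
      rw [← Real.exp_add]; ring_nf
    rw [hE]
    field_simp
    ring
  rw [setIntegral_congr_fun measurableSet_Ioi hcong]
  have i1 : IntegrableOn (fun t : ℝ => mu2*(t*Real.exp (-(mu2*t)))) (Ioi 0) :=
    (texpIntOn mu2 h2).const_mul _
  have i2 : IntegrableOn (fun t : ℝ => (mu2/mu3)*Real.exp (-(mu2*t))) (Ioi 0) :=
    (expIntOn mu2 0 h2).const_mul _
  have i3 : IntegrableOn (fun t : ℝ => (mu2/mu3)*Real.exp (-((mu2+mu3)*t))) (Ioi 0) :=
    (expIntOn (mu2+mu3) 0 (by linarith)).const_mul _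
  have i12 : IntegrableOn (fun t : ℝ => mu2*(t*Real.exp (-(mu2*t))) - (mu2/mu3)*Real.exp (-(mu2*t))) (Ioi 0) := i1.sub i2
  rw [integral_add i12 i3, integral_sub i1 i2,
    integral_const_mul, integral_const_mul, integral_const_mul,
    texpInt mu2 h2, expInt mu2 0 h2, expInt (mu2+mu3) 0 (by linarith)]
  simp only [mul_zero, neg_zero, Real.exp_zero]
  field_simp
  ring

lemma absExpIntegrable (c : ℝ) (hc : 0 < c) :
    Integrable (fun x : ℝ => Real.exp (-(c * |x|))) := by
  have hIoi : IntegrableOn (fun x : ℝ => Real.exp (-(c * |x|))) (Ioi 0) := by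
    refine (expIntOn c 0 hc).congr_fun ?_ measurableSet_Ioi
    intro x hx
    simp only
    rw [abs_of_pos hx]
  have hIic : IntegrableOn (fun x : ℝ => Real.exp (-(c * |x|))) (Iic 0) := by
    rw [← Measure.map_neg_eq_self (volume : Measure ℝ)]
    have m : MeasurableEmbedding fun x : ℝ => -x := (Homeomorph.neg ℝ).measurableEmbedding
    rw [m.integrableOn_map_iff]
    simp_rw [Function.comp_def, abs_neg, neg_preimage, neg_Iic, neg_zero]
    exact Iff.mpr integrableOn_Ici_iff_integrableOn_Ioi hIoi
  have := hIic.union hIoi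
  rwa [Iic_union_Ioi, integrableOn_univ] at this

lemma absExpVal (c : ℝ) (hc : 0 < c) :
    ∫ x : ℝ, Real.exp (-(c * |x|)) = 2/c := by
  have := integral_comp_abs (f := fun x => Real.exp (-(c * x)))
  rw [expInt c 0 hc] at this
  simpa [div_eq_mul_inv] using this

lemma shiftIic (G : ℝ → ℝ) (a : ℝ) :
    ∫ t in Iic (0:ℝ), G (a + t) = ∫ y in Iic a, G y := by
  rw [← integral_indicator measurableSet_Iic, ← integral_indicator measurableSet_Iic]
  have key : ∀ x : ℝ, (Iic (0:ℝ)).indicator (fun t => G (a + t)) x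
      = (Iic a).indicator G (x + a) := by
    intro x
    by_cases hx : x ≤ 0
    · rw [Set.indicator_of_mem (show x ∈ Iic (0:ℝ) from hx),
        Set.indicator_of_mem (show x + a ∈ Iic a by simp [hx])]
      ring_nf
    · rw [Set.indicator_of_notMem (show x ∉ Iic (0:ℝ) from hx),
        Set.indicator_of_notMem (show x + a ∉ Iic a by simp [lt_of_not_ge hx])]
  simp_rw [key]
  exact integral_add_right_eq_self (fun y => (Iic a).indicator G y) a

lemma shiftIoi (G : ℝ → ℝ) (a : ℝ) :
    ∫ b in Ioi (0:ℝ), G (a - b) = ∫ y in Iic a, G y := by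
  have h := integral_comp_neg_Ioi (0:ℝ) (fun t => G (a + t))
  simp only [neg_zero] at h
  rw [show (∫ b in Ioi (0:ℝ), G (a - b)) = ∫ x in Ioi (0:ℝ), G (a + -x) by
    simp_rw [sub_eq_add_neg], h, shiftIic]

lemma L1 (m : ℝ) (hm : 0 < m) (h : ℝ → ℝ) (hc : Continuous h) (hb : ∀ x, |h x| ≤ 1) :
    ∫ a in Ioi (0:ℝ), ∫ b in Ioi (0:ℝ), h (a - b) * (m^2 * Real.exp (-(m*(a+b))))
    = (m/2) * ∫ x : ℝ, h x * Real.exp (-(m * |x|)) := by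
  set G : ℝ → ℝ := fun y => h y * Real.exp (m * y) with hG
  set S : Set (ℝ × ℝ) := {p : ℝ × ℝ | 0 < p.1 ∧ p.2 < p.1} with hS
  have hSm : MeasurableSet S := by
    apply MeasurableSet.inter
    · exact measurableSet_lt measurable_const measurable_fst
    · exact measurableSet_lt measurable_snd measurable_fst
  set F : ℝ × ℝ → ℝ := fun p => G p.2 * (m^2 * Real.exp (-(2*m*p.1))) with hF
  set Psi : ℝ × ℝ → ℝ := S.indicator F with hPsi
  -- Step 1: inner substitution
  have step1 : ∀ a ∈ Ioi (0:ℝ),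
      ∫ b in Ioi (0:ℝ), h (a - b) * (m^2 * Real.exp (-(m*(a+b))))
      = (∫ y in Iic a, G y) * (m^2 * Real.exp (-(2*m*a))) := by
    intro a _
    have e1 : ∀ b : ℝ, h (a - b) * (m^2 * Real.exp (-(m*(a+b))))
        = G (a - b) * (m^2 * Real.exp (-(2*m*a))) := by
      intro b
      rw [hG]
      simp only
      have e0 : Real.exp (m*(a-b)) * Real.exp (-(2*m*a)) = Real.exp (-(m*(a+b))) := by
        rw [← Real.exp_add]; ring_nf
      rw [← e0]; ring
    simp_rw [e1]
    rw [integral_mul_const, shiftIoi G a]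
  rw [setIntegral_congr_fun measurableSet_Ioi step1]
  -- Integrability of Psi
  have hFm : AEStronglyMeasurable Psi (volume.prod volume) := by
    apply AEStronglyMeasurable.indicator _ hSm
    apply Continuous.aestronglyMeasurable
    fun_prop
  have hbound : ∀ p : ℝ × ℝ, ‖Psi p‖ ≤ m^2 * Real.exp (-(m/2 * |p.1|)) * Real.exp (-(m/2 * |p.2|)) := by
    intro p
    by_cases hp : p ∈ S
    · rw [hPsi, Set.indicator_of_mem hp]
      obtain ⟨hp1, hp2⟩ := hp
      rw [hF, hG]
      simp only [norm_mul, Real.norm_eq_abs]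
      have h1 : |h p.2| ≤ 1 := hb p.2
      rw [abs_of_nonneg (by positivity : (0:ℝ) ≤ m^2), abs_of_pos (Real.exp_pos (m * p.2)),
        abs_of_pos (Real.exp_pos (-(2*m*p.1)))]
      have key : Real.exp (m * p.2) * (m^2 * Real.exp (-(2*m*p.1)))
          ≤ m^2 * Real.exp (-(m/2 * |p.1|)) * Real.exp (-(m/2 * |p.2|)) := by
        rw [show Real.exp (m * p.2) * (m^2 * Real.exp (-(2*m*p.1)))
            = m^2 * (Real.exp (m * p.2) * Real.exp (-(2*m*p.1))) by ring,
          show m^2 * Real.exp (-(m/2 * |p.1|)) * Real.exp (-(m/2 * |p.2|))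
            = m^2 * (Real.exp (-(m/2 * |p.1|)) * Real.exp (-(m/2 * |p.2|))) by ring,
          ← Real.exp_add, ← Real.exp_add]
        apply mul_le_mul_of_nonneg_left _ (by positivity)
        apply Real.exp_le_exp.mpr
        rw [abs_of_pos hp1]
        rcases abs_cases p.2 with ⟨he, _⟩ | ⟨he, _⟩ <;> rw [he] <;> nlinarith
      calc |h p.2| * Real.exp (m * p.2) * (m^2 * Real.exp (-(2*m*p.1)))
          ≤ 1 * (Real.exp (m * p.2) * (m^2 * Real.exp (-(2*m*p.1)))) := by
            rw [mul_assoc]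
            apply mul_le_mul_of_nonneg_right h1 (by positivity)
        _ ≤ m^2 * Real.exp (-(m/2 * |p.1|)) * Real.exp (-(m/2 * |p.2|)) := by
            rw [one_mul]; exact key
    · rw [hPsi, Set.indicator_of_notMem hp]
      simp only [norm_zero]
      positivity
  have hgint : Integrable (fun p : ℝ × ℝ => m^2 * Real.exp (-(m/2 * |p.1|)) * Real.exp (-(m/2 * |p.2|)))
      (volume.prod volume) := by
    have h1 : Integrable (fun x : ℝ => m^2 * Real.exp (-(m/2 * |x|))) :=
      (absExpIntegrable (m/2) (by linarith)).const_mul _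
    have h2 : Integrable (fun x : ℝ => Real.exp (-(m/2 * |x|))) :=
      absExpIntegrable (m/2) (by linarith)
    exact h1.mul_prod h2
  have hPsiInt : Integrable Psi (volume.prod volume) :=
    Integrable.mono' hgint hFm (Filter.Eventually.of_forall hbound)
  -- LHS equals iterated integral of Psi (a outer)
  have eqL : ∫ a in Ioi (0:ℝ), (∫ y in Iic a, G y) * (m^2 * Real.exp (-(2*m*a)))
      = ∫ a : ℝ, ∫ y : ℝ, Psi (a, y) := by
    rw [← integral_indicator measurableSet_Ioi]
    congr 1
    funext a
    by_cases ha : a ∈ Ioi (0:ℝ)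
    · rw [Set.indicator_of_mem ha]
      have : ∀ y : ℝ, Psi (a, y) = (Iio a).indicator (fun y => G y * (m^2 * Real.exp (-(2*m*a)))) y := by
        intro y
        by_cases hy : y < a
        · rw [hPsi, Set.indicator_of_mem (show (a,y) ∈ S from ⟨ha, hy⟩),
            Set.indicator_of_mem (show y ∈ Iio a from hy)]
        · rw [hPsi, Set.indicator_of_notMem (show (a,y) ∉ S from fun hmem => hy hmem.2),
            Set.indicator_of_notMem (show y ∉ Iio a from hy)]
      simp_rw [this]
      rw [integral_indicator measurableSet_Iio, integral_mul_const,
        ← integral_Iic_eq_integral_Iio]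
    · rw [Set.indicator_of_notMem ha]
      have : ∀ y : ℝ, Psi (a, y) = 0 := by
        intro y
        rw [hPsi, Set.indicator_of_notMem (show (a,y) ∉ S from fun hmem => ha hmem.1)]
      simp_rw [this]
      simp
  -- swap
  have eqswap : ∫ a : ℝ, ∫ y : ℝ, Psi (a, y) = ∫ y : ℝ, ∫ a : ℝ, Psi (a, y) := by
    have h1 := integral_prod Psi hPsiInt
    have h2 := integral_prod_symm Psi hPsiInt
    rw [← h1, ← h2]
  -- inner over a
  have eqR : ∫ y : ℝ, ∫ a : ℝ, Psi (a, y) = (m/2) * ∫ x : ℝ, h x * Real.exp (-(m * |x|)) := by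
    have inner : ∀ y : ℝ, (∫ a : ℝ, Psi (a, y)) = (m/2) * (h y * Real.exp (-(m * |y|))) := by
      intro y
      have : ∀ a : ℝ, Psi (a, y) = (Ioi (max 0 y)).indicator
          (fun a => G y * (m^2 * Real.exp (-(2*m*a)))) a := by
        intro a
        by_cases ha : a ∈ Ioi (max 0 y)
        · have hmem : (a, y) ∈ S := ⟨lt_of_le_of_lt (le_max_left 0 y) ha,
            lt_of_le_of_lt (le_max_right 0 y) ha⟩
          rw [hPsi, Set.indicator_of_mem hmem, Set.indicator_of_mem ha]
        · have hnmem : (a, y) ∉ S := fun hmem => ha (max_lt hmem.1 hmem.2)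
          rw [hPsi, Set.indicator_of_notMem hnmem, Set.indicator_of_notMem ha]
      simp_rw [this]
      rw [integral_indicator measurableSet_Ioi]
      simp_rw [show ∀ a : ℝ, G y * (m^2 * Real.exp (-(2*m*a)))
          = (G y * m^2) * Real.exp (-(2*m*a)) from fun a => by ring]
      rw [integral_const_mul, expInt (2*m) (max 0 y) (by linarith)]
      rw [hG]
      simp only
      rcases le_or_gt y 0 with hy | hy
      · rw [max_eq_left hy, abs_of_nonpos hy]
        rw [show -(2*m*(0:ℝ)) = 0 by ring, Real.exp_zero]
        rw [show -(m * -y) = m * y by ring]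
        field_simp
      · rw [max_eq_right hy.le, abs_of_pos hy]
        have e4 : Real.exp (m*y) * Real.exp (-(2*m*y)) = Real.exp (-(m*y)) := by
          rw [← Real.exp_add]; ring_nf
        field_simp
        rw [show h y * Real.exp (m*y) * Real.exp (-(m*y*2))
            = (Real.exp (m*y) * Real.exp (-(2*m*y))) * h y by ring_nf, e4]
        ring
    simp_rw [inner]
    rw [integral_const_mul]
  rw [eqL, eqswap, eqR]

lemma expIntOnIic (c a : ℝ) (hc : 0 < c) :
    IntegrableOn (fun x : ℝ => Real.exp (c * x)) (Iic a) := by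
  rw [← Measure.map_neg_eq_self (volume : Measure ℝ)]
  have m : MeasurableEmbedding fun x : ℝ => -x := (Homeomorph.neg ℝ).measurableEmbedding
  rw [m.integrableOn_map_iff]
  have : (fun x : ℝ => Real.exp (c * x)) ∘ (fun x : ℝ => -x) = fun x => Real.exp (-(c * x)) := by
    funext x; simp [Function.comp]
  rw [this, neg_preimage, neg_Iic]
  exact Iff.mpr integrableOn_Ici_iff_integrableOn_Ioi (expIntOn c (-a) hc)

lemma expIntIic (c a : ℝ) (hc : 0 < c) :
    ∫ x in Iic a, Real.exp (c * x) = Real.exp (c * a) / c := by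
  have h := integral_comp_neg_Iic a (fun x => Real.exp (-(c * x)))
  have h2 : ∀ x : ℝ, Real.exp (-(c * -x)) = Real.exp (c * x) := by intro x; ring_nf
  simp_rw [h2] at h
  rw [h, expInt c (-a) hc]
  ring_nf

lemma Jval (Lam mu2 mu3 : ℝ) (hL : 0 < Lam) (h2 : 0 < mu2) (h3 : 0 < mu3) :
    ∫ x : ℝ, (∫ y : ℝ, Real.exp (-(Lam * |x + y|)) * Real.exp (-(mu3 * |y|)))
        * Real.exp (-(mu2 * |x|))
    = 2/((Lam+mu2)*(Lam+mu3)) + 2/((mu2+mu3)*(Lam+mu2)) + 2/((mu2+mu3)*(Lam+mu3)) := by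
  set W : ℝ × ℝ → ℝ := fun p =>
    Real.exp (-(Lam * |p.1 + p.2|)) * Real.exp (-(mu3 * |p.2|)) * Real.exp (-(mu2 * |p.1|)) with hW
  have hWcont : Continuous W := by fun_prop
  have hWint : Integrable W (volume.prod volume) := by
    refine Integrable.mono'
      (g := fun p : ℝ × ℝ => Real.exp (-(mu2 * |p.1|)) * Real.exp (-(mu3 * |p.2|)))
      ((absExpIntegrable mu2 h2).mul_prod (absExpIntegrable mu3 h3))
      hWcont.aestronglyMeasurable ?_
    refine Filter.Eventually.of_forall (fun p => ?_)
    rw [hW]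
    simp only [Real.norm_eq_abs]
    rw [abs_of_nonneg (by positivity)]
    have hone : Real.exp (-(Lam * |p.1 + p.2|)) ≤ 1 := by
      rw [Real.exp_le_one_iff]
      have := abs_nonneg (p.1 + p.2)
      nlinarith
    calc Real.exp (-(Lam * |p.1 + p.2|)) * Real.exp (-(mu3 * |p.2|)) * Real.exp (-(mu2 * |p.1|))
        ≤ 1 * Real.exp (-(mu3 * |p.2|)) * Real.exp (-(mu2 * |p.1|)) := by
          apply mul_le_mul_of_nonneg_right _ (Real.exp_pos _).le
          exact mul_le_mul_of_nonneg_right hone (Real.exp_pos _).le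
      _ = Real.exp (-(mu2 * |p.1|)) * Real.exp (-(mu3 * |p.2|)) := by ring
  -- Express LHS as a product integral
  have hiter : (∫ x : ℝ, (∫ y : ℝ, Real.exp (-(Lam * |x + y|)) * Real.exp (-(mu3 * |y|)))
        * Real.exp (-(mu2 * |x|)))
      = ∫ p : ℝ × ℝ, W p ∂(volume.prod volume) := by
    have e1 : ∀ x : ℝ, (∫ y : ℝ, Real.exp (-(Lam * |x + y|)) * Real.exp (-(mu3 * |y|)))
        * Real.exp (-(mu2 * |x|)) = ∫ y : ℝ, W (x, y) := by
      intro x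
      rw [← integral_mul_const]
    simp_rw [e1]
    exact integral_integral (f := fun x y => W (x, y)) hWint
  rw [hiter]
  -- the six cones
  set C1 : Set (ℝ × ℝ) := {p : ℝ × ℝ | 0 ≤ p.1 ∧ 0 ≤ p.2} with hC1
  set C2 : Set (ℝ × ℝ) := {p : ℝ × ℝ | p.1 < 0 ∧ p.2 < 0} with hC2
  set C3 : Set (ℝ × ℝ) := {p : ℝ × ℝ | 0 ≤ p.1 ∧ p.2 < 0 ∧ 0 ≤ p.1 + p.2} with hC3
  set C4 : Set (ℝ × ℝ) := {p : ℝ × ℝ | 0 ≤ p.1 ∧ p.2 < 0 ∧ p.1 + p.2 < 0} with hC4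
  set C5 : Set (ℝ × ℝ) := {p : ℝ × ℝ | p.1 < 0 ∧ 0 ≤ p.2 ∧ 0 ≤ p.1 + p.2} with hC5
  set C6 : Set (ℝ × ℝ) := {p : ℝ × ℝ | p.1 < 0 ∧ 0 ≤ p.2 ∧ p.1 + p.2 < 0} with hC6
  have hadd : Measurable (fun p : ℝ × ℝ => p.1 + p.2) := measurable_fst.add measurable_snd
  have hC1m : MeasurableSet C1 :=
    (measurableSet_le measurable_const measurable_fst).inter
      (measurableSet_le measurable_const measurable_snd)
  have hC2m : MeasurableSet C2 :=
    (measurableSet_lt measurable_fst measurable_const).inter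
      (measurableSet_lt measurable_snd measurable_const)
  have hC3m : MeasurableSet C3 :=
    (measurableSet_le measurable_const measurable_fst).inter
      ((measurableSet_lt measurable_snd measurable_const).inter
        (measurableSet_le measurable_const hadd))
  have hC4m : MeasurableSet C4 :=
    (measurableSet_le measurable_const measurable_fst).inter
      ((measurableSet_lt measurable_snd measurable_const).inter
        (measurableSet_lt hadd measurable_const))
  have hC5m : MeasurableSet C5 :=
    (measurableSet_lt measurable_fst measurable_const).inter
      ((measurableSet_le measurable_const measurable_snd).inter
        (measurableSet_le measurable_const hadd))
  have hC6m : MeasurableSet C6 :=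
    (measurableSet_lt measurable_fst measurable_const).inter
      ((measurableSet_le measurable_const measurable_snd).inter
        (measurableSet_lt hadd measurable_const))
  -- decomposition
  have hdec : ∀ p : ℝ × ℝ, W p = C1.indicator W p + C2.indicator W p + C3.indicator W p
      + C4.indicator W p + C5.indicator W p + C6.indicator W p := by
    intro p
    rcases le_or_gt 0 p.1 with ha | ha <;> rcases le_or_gt 0 p.2 with hb | hb <;>
      rcases le_or_gt 0 (p.1 + p.2) with hc | hc
    · rw [Set.indicator_of_mem (show p ∈ C1 by rw [hC1]; exact ⟨ha, hb⟩),
        Set.indicator_of_notMem (show p ∉ C2 by rw [hC2]; intro h; linarith [h.1, h.2]),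
        Set.indicator_of_notMem (show p ∉ C3 by rw [hC3]; intro h; linarith [h.2.1]),
        Set.indicator_of_notMem (show p ∉ C4 by rw [hC4]; intro h; linarith [h.2.1]),
        Set.indicator_of_notMem (show p ∉ C5 by rw [hC5]; intro h; linarith [h.1]),
        Set.indicator_of_notMem (show p ∉ C6 by rw [hC6]; intro h; linarith [h.1])]
      ring
    · linarith
    · rw [Set.indicator_of_notMem (show p ∉ C1 by rw [hC1]; intro h; linarith [h.2]),
        Set.indicator_of_notMem (show p ∉ C2 by rw [hC2]; intro h; linarith [h.1]),
        Set.indicator_of_mem (show p ∈ C3 by rw [hC3]; exact ⟨ha, hb, hc⟩),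
        Set.indicator_of_notMem (show p ∉ C4 by rw [hC4]; intro h; linarith [h.2.2]),
        Set.indicator_of_notMem (show p ∉ C5 by rw [hC5]; intro h; linarith [h.1]),
        Set.indicator_of_notMem (show p ∉ C6 by rw [hC6]; intro h; linarith [h.1])]
      ring
    · rw [Set.indicator_of_notMem (show p ∉ C1 by rw [hC1]; intro h; linarith [h.2]),
        Set.indicator_of_notMem (show p ∉ C2 by rw [hC2]; intro h; linarith [h.1]),
        Set.indicator_of_notMem (show p ∉ C3 by rw [hC3]; intro h; linarith [h.2.2]),
        Set.indicator_of_mem (show p ∈ C4 by rw [hC4]; exact ⟨ha, hb, hc⟩),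
        Set.indicator_of_notMem (show p ∉ C5 by rw [hC5]; intro h; linarith [h.1]),
        Set.indicator_of_notMem (show p ∉ C6 by rw [hC6]; intro h; linarith [h.1])]
      ring
    · rw [Set.indicator_of_notMem (show p ∉ C1 by rw [hC1]; intro h; linarith [h.1]),
        Set.indicator_of_notMem (show p ∉ C2 by rw [hC2]; intro h; linarith [h.2]),
        Set.indicator_of_notMem (show p ∉ C3 by rw [hC3]; intro h; linarith [h.1]),
        Set.indicator_of_notMem (show p ∉ C4 by rw [hC4]; intro h; linarith [h.1]),
        Set.indicator_of_mem (show p ∈ C5 by rw [hC5]; exact ⟨ha, hb, hc⟩),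
        Set.indicator_of_notMem (show p ∉ C6 by rw [hC6]; intro h; linarith [h.2.2])]
      ring
    · rw [Set.indicator_of_notMem (show p ∉ C1 by rw [hC1]; intro h; linarith [h.1]),
        Set.indicator_of_notMem (show p ∉ C2 by rw [hC2]; intro h; linarith [h.2]),
        Set.indicator_of_notMem (show p ∉ C3 by rw [hC3]; intro h; linarith [h.1]),
        Set.indicator_of_notMem (show p ∉ C4 by rw [hC4]; intro h; linarith [h.1]),
        Set.indicator_of_notMem (show p ∉ C5 by rw [hC5]; intro h; linarith [h.2.2]),
        Set.indicator_of_mem (show p ∈ C6 by rw [hC6]; exact ⟨ha, hb, hc⟩)]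
      ring
    · linarith
    · rw [Set.indicator_of_notMem (show p ∉ C1 by rw [hC1]; intro h; linarith [h.1]),
        Set.indicator_of_mem (show p ∈ C2 by rw [hC2]; exact ⟨ha, hb⟩),
        Set.indicator_of_notMem (show p ∉ C3 by rw [hC3]; intro h; linarith [h.1]),
        Set.indicator_of_notMem (show p ∉ C4 by rw [hC4]; intro h; linarith [h.1]),
        Set.indicator_of_notMem (show p ∉ C5 by rw [hC5]; intro h; linarith [h.2.1]),
        Set.indicator_of_notMem (show p ∉ C6 by rw [hC6]; intro h; linarith [h.2.1])]
      ring
  -- split the integral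
  have i1 := hWint.indicator hC1m
  have i2 := hWint.indicator hC2m
  have i3 := hWint.indicator hC3m
  have i4 := hWint.indicator hC4m
  have i5 := hWint.indicator hC5m
  have i6 := hWint.indicator hC6m
  have s2 : Integrable (fun p : ℝ × ℝ => C1.indicator W p + C2.indicator W p)
      (volume.prod volume) := i1.add i2
  have s3 : Integrable (fun p : ℝ × ℝ => C1.indicator W p + C2.indicator W p + C3.indicator W p)
      (volume.prod volume) := s2.add i3
  have s4 : Integrable (fun p : ℝ × ℝ => C1.indicator W p + C2.indicator W p + C3.indicator W p
      + C4.indicator W p) (volume.prod volume) := s3.add i4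
  have s5 : Integrable (fun p : ℝ × ℝ => C1.indicator W p + C2.indicator W p + C3.indicator W p
      + C4.indicator W p + C5.indicator W p) (volume.prod volume) := s4.add i5
  have hsplit : ∫ p : ℝ × ℝ, W p ∂(volume.prod volume)
      = (∫ p : ℝ × ℝ, C1.indicator W p ∂(volume.prod volume))
      + (∫ p : ℝ × ℝ, C2.indicator W p ∂(volume.prod volume))
      + (∫ p : ℝ × ℝ, C3.indicator W p ∂(volume.prod volume))
      + (∫ p : ℝ × ℝ, C4.indicator W p ∂(volume.prod volume))
      + (∫ p : ℝ × ℝ, C5.indicator W p ∂(volume.prod volume))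
      + (∫ p : ℝ × ℝ, C6.indicator W p ∂(volume.prod volume)) := by
    calc ∫ p : ℝ × ℝ, W p ∂(volume.prod volume)
        = ∫ p : ℝ × ℝ, (C1.indicator W p + C2.indicator W p + C3.indicator W p
          + C4.indicator W p + C5.indicator W p + C6.indicator W p) ∂(volume.prod volume) := by
          exact integral_congr_ae (Filter.Eventually.of_forall hdec)
      _ = _ := by
          rw [integral_add s5 i6, integral_add s4 i5, integral_add s3 i4,
            integral_add s2 i3, integral_add i1 i2]
  rw [hsplit]
  -- Piece 1
  have P1 : ∫ p : ℝ × ℝ, C1.indicator W p ∂(volume.prod volume)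
      = 1/((Lam+mu2)*(Lam+mu3)) := by
    rw [integral_prod _ i1]
    have inner : ∀ x : ℝ, (∫ y : ℝ, C1.indicator W (x, y))
        = (Ici (0:ℝ)).indicator (fun x => Real.exp (-((Lam+mu2)*x)) * (1/(Lam+mu3))) x := by
      intro x
      by_cases hx : 0 ≤ x
      · rw [Set.indicator_of_mem (show x ∈ Ici (0:ℝ) from hx)]
        have hy : ∀ y : ℝ, C1.indicator W (x, y)
            = (Ici (0:ℝ)).indicator
              (fun y => Real.exp (-((Lam+mu3)*y)) * Real.exp (-((Lam+mu2)*x))) y := by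
          intro y
          by_cases hy : 0 ≤ y
          · rw [Set.indicator_of_mem (show (x,y) ∈ C1 by rw [hC1]; exact ⟨hx, hy⟩),
              Set.indicator_of_mem (show y ∈ Ici (0:ℝ) from hy), hW]
            simp only
            rw [abs_of_nonneg (by linarith : (0:ℝ) ≤ x + y), abs_of_nonneg hy, abs_of_nonneg hx,
              ← Real.exp_add, ← Real.exp_add, ← Real.exp_add]
            ring_nf
          · rw [Set.indicator_of_notMem (show (x,y) ∉ C1 by rw [hC1]; exact fun h => hy h.2),
              Set.indicator_of_notMem (show y ∉ Ici (0:ℝ) from hy)]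
        simp_rw [hy]
        rw [integral_indicator measurableSet_Ici, integral_Ici_eq_integral_Ioi,
          integral_mul_const, expInt (Lam+mu3) 0 (by linarith)]
        rw [mul_zero, neg_zero, Real.exp_zero]
        ring
      · rw [Set.indicator_of_notMem (show x ∉ Ici (0:ℝ) from hx)]
        have hy : ∀ y : ℝ, C1.indicator W (x, y) = 0 := fun y =>
          Set.indicator_of_notMem (show (x,y) ∉ C1 by rw [hC1]; exact fun h => hx h.1) _
        simp_rw [hy]
        simp
    simp_rw [inner]
    rw [integral_indicator measurableSet_Ici, integral_Ici_eq_integral_Ioi,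
      integral_mul_const, expInt (Lam+mu2) 0 (by linarith)]
    rw [mul_zero, neg_zero, Real.exp_zero]
    field_simp
  -- Piece 2
  have P2 : ∫ p : ℝ × ℝ, C2.indicator W p ∂(volume.prod volume)
      = 1/((Lam+mu2)*(Lam+mu3)) := by
    rw [integral_prod _ i2]
    have inner : ∀ x : ℝ, (∫ y : ℝ, C2.indicator W (x, y))
        = (Iio (0:ℝ)).indicator (fun x => Real.exp ((Lam+mu2)*x) * (1/(Lam+mu3))) x := by
      intro x
      by_cases hx : x < 0
      · rw [Set.indicator_of_mem (show x ∈ Iio (0:ℝ) from hx)]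
        have hy : ∀ y : ℝ, C2.indicator W (x, y)
            = (Iio (0:ℝ)).indicator
              (fun y => Real.exp ((Lam+mu3)*y) * Real.exp ((Lam+mu2)*x)) y := by
          intro y
          by_cases hy : y < 0
          · rw [Set.indicator_of_mem (show (x,y) ∈ C2 by rw [hC2]; exact ⟨hx, hy⟩),
              Set.indicator_of_mem (show y ∈ Iio (0:ℝ) from hy), hW]
            simp only
            rw [abs_of_neg (by linarith : x + y < 0), abs_of_neg hy, abs_of_neg hx,
              ← Real.exp_add, ← Real.exp_add, ← Real.exp_add]
            ring_nf
          · rw [Set.indicator_of_notMem (show (x,y) ∉ C2 by rw [hC2]; exact fun h => hy h.2),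
              Set.indicator_of_notMem (show y ∉ Iio (0:ℝ) from hy)]
        simp_rw [hy]
        rw [integral_indicator measurableSet_Iio, ← integral_Iic_eq_integral_Iio,
          integral_mul_const, expIntIic (Lam+mu3) 0 (by linarith)]
        rw [mul_zero, Real.exp_zero]
        ring
      · rw [Set.indicator_of_notMem (show x ∉ Iio (0:ℝ) from hx)]
        have hy : ∀ y : ℝ, C2.indicator W (x, y) = 0 := fun y =>
          Set.indicator_of_notMem (show (x,y) ∉ C2 by rw [hC2]; exact fun h => hx h.1) _
        simp_rw [hy]
        simp
    simp_rw [inner]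
    rw [integral_indicator measurableSet_Iio, ← integral_Iic_eq_integral_Iio,
      integral_mul_const, expIntIic (Lam+mu2) 0 (by linarith)]
    rw [mul_zero, Real.exp_zero]
    field_simp
  -- Piece 3
  have P3 : ∫ p : ℝ × ℝ, C3.indicator W p ∂(volume.prod volume)
      = 1/((mu2+mu3)*(Lam+mu2)) := by
    rw [integral_prod_symm _ i3]
    have inner : ∀ y : ℝ, (∫ x : ℝ, C3.indicator W (x, y))
        = (Iio (0:ℝ)).indicator (fun y => Real.exp ((mu2+mu3)*y) * (1/(Lam+mu2))) y := by
      intro y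
      by_cases hy : y < 0
      · rw [Set.indicator_of_mem (show y ∈ Iio (0:ℝ) from hy)]
        have hx : ∀ x : ℝ, C3.indicator W (x, y)
            = (Ici (-y)).indicator
              (fun x => Real.exp (-((Lam+mu2)*x)) * Real.exp ((mu3-Lam)*y)) x := by
          intro x
          by_cases hx : -y ≤ x
          · rw [Set.indicator_of_mem (show (x,y) ∈ C3 by
                rw [hC3]; exact ⟨by linarith, hy, by linarith⟩),
              Set.indicator_of_mem (show x ∈ Ici (-y) from hx), hW]
            simp only
            rw [abs_of_nonneg (by linarith : (0:ℝ) ≤ x + y), abs_of_neg hy,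
              abs_of_nonneg (by linarith : (0:ℝ) ≤ x),
              ← Real.exp_add, ← Real.exp_add, ← Real.exp_add]
            ring_nf
          · rw [Set.indicator_of_notMem (show (x,y) ∉ C3 by
                rw [hC3]; intro h; exact hx (by linarith [h.2.2])),
              Set.indicator_of_notMem (show x ∉ Ici (-y) from hx)]
        simp_rw [hx]
        rw [integral_indicator measurableSet_Ici, integral_Ici_eq_integral_Ioi,
          integral_mul_const, expInt (Lam+mu2) (-y) (by linarith)]
        rw [show -((Lam+mu2) * -y) = (Lam+mu2)*y by ring, div_mul_eq_mul_div, ← Real.exp_add,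
          show (Lam+mu2)*y + (mu3-Lam)*y = (mu2+mu3)*y by ring]
        ring
      · rw [Set.indicator_of_notMem (show y ∉ Iio (0:ℝ) from hy)]
        have hx : ∀ x : ℝ, C3.indicator W (x, y) = 0 := fun x =>
          Set.indicator_of_notMem (show (x,y) ∉ C3 by rw [hC3]; exact fun h => hy h.2.1) _
        simp_rw [hx]
        simp
    simp_rw [inner]
    rw [integral_indicator measurableSet_Iio, ← integral_Iic_eq_integral_Iio,
      integral_mul_const, expIntIic (mu2+mu3) 0 (by linarith)]
    rw [mul_zero, Real.exp_zero]
    field_simp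
  -- Piece 4
  have P4 : ∫ p : ℝ × ℝ, C4.indicator W p ∂(volume.prod volume)
      = 1/((mu2+mu3)*(Lam+mu3)) := by
    rw [integral_prod _ i4]
    have inner : ∀ x : ℝ, (∫ y : ℝ, C4.indicator W (x, y))
        = (Ici (0:ℝ)).indicator (fun x => Real.exp (-((mu2+mu3)*x)) * (1/(Lam+mu3))) x := by
      intro x
      by_cases hx : 0 ≤ x
      · rw [Set.indicator_of_mem (show x ∈ Ici (0:ℝ) from hx)]
        have hy : ∀ y : ℝ, C4.indicator W (x, y)
            = (Iio (-x)).indicator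
              (fun y => Real.exp ((Lam+mu3)*y) * Real.exp ((Lam-mu2)*x)) y := by
          intro y
          by_cases hy : y < -x
          · rw [Set.indicator_of_mem (show (x,y) ∈ C4 by
                rw [hC4]; exact ⟨hx, by linarith, by linarith⟩),
              Set.indicator_of_mem (show y ∈ Iio (-x) from hy), hW]
            simp only
            rw [abs_of_neg (by linarith : x + y < 0), abs_of_neg (by linarith : y < 0),
              abs_of_nonneg hx,
              ← Real.exp_add, ← Real.exp_add, ← Real.exp_add]
            ring_nf
          · rw [Set.indicator_of_notMem (show (x,y) ∉ C4 by
                rw [hC4]; intro h; exact hy (by linarith [h.2.2])),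
              Set.indicator_of_notMem (show y ∉ Iio (-x) from hy)]
        simp_rw [hy]
        rw [integral_indicator measurableSet_Iio, ← integral_Iic_eq_integral_Iio,
          integral_mul_const, expIntIic (Lam+mu3) (-x) (by linarith)]
        rw [show (Lam+mu3) * -x = -((Lam+mu3)*x) by ring, div_mul_eq_mul_div, ← Real.exp_add,
          show -((Lam+mu3)*x) + (Lam-mu2)*x = -((mu2+mu3)*x) by ring]
        ring
      · rw [Set.indicator_of_notMem (show x ∉ Ici (0:ℝ) from hx)]
        have hy : ∀ y : ℝ, C4.indicator W (x, y) = 0 := fun y =>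
          Set.indicator_of_notMem (show (x,y) ∉ C4 by rw [hC4]; exact fun h => hx h.1) _
        simp_rw [hy]
        simp
    simp_rw [inner]
    rw [integral_indicator measurableSet_Ici, integral_Ici_eq_integral_Ioi,
      integral_mul_const, expInt (mu2+mu3) 0 (by linarith)]
    rw [mul_zero, neg_zero, Real.exp_zero]
    field_simp
  -- Piece 5
  have P5 : ∫ p : ℝ × ℝ, C5.indicator W p ∂(volume.prod volume)
      = 1/((mu2+mu3)*(Lam+mu3)) := by
    rw [integral_prod _ i5]
    have inner : ∀ x : ℝ, (∫ y : ℝ, C5.indicator W (x, y))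
        = (Iio (0:ℝ)).indicator (fun x => Real.exp ((mu2+mu3)*x) * (1/(Lam+mu3))) x := by
      intro x
      by_cases hx : x < 0
      · rw [Set.indicator_of_mem (show x ∈ Iio (0:ℝ) from hx)]
        have hy : ∀ y : ℝ, C5.indicator W (x, y)
            = (Ici (-x)).indicator
              (fun y => Real.exp (-((Lam+mu3)*y)) * Real.exp ((mu2-Lam)*x)) y := by
          intro y
          by_cases hy : -x ≤ y
          · rw [Set.indicator_of_mem (show (x,y) ∈ C5 by
                rw [hC5]; exact ⟨hx, by linarith, by linarith⟩),
              Set.indicator_of_mem (show y ∈ Ici (-x) from hy), hW]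
            simp only
            rw [abs_of_nonneg (by linarith : (0:ℝ) ≤ x + y),
              abs_of_nonneg (by linarith : (0:ℝ) ≤ y), abs_of_neg hx,
              ← Real.exp_add, ← Real.exp_add, ← Real.exp_add]
            ring_nf
          · rw [Set.indicator_of_notMem (show (x,y) ∉ C5 by
                rw [hC5]; intro h; exact hy (by linarith [h.2.2])),
              Set.indicator_of_notMem (show y ∉ Ici (-x) from hy)]
        simp_rw [hy]
        rw [integral_indicator measurableSet_Ici, integral_Ici_eq_integral_Ioi,
          integral_mul_const, expInt (Lam+mu3) (-x) (by linarith)]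
        rw [show -((Lam+mu3) * -x) = (Lam+mu3)*x by ring, div_mul_eq_mul_div, ← Real.exp_add,
          show (Lam+mu3)*x + (mu2-Lam)*x = (mu2+mu3)*x by ring]
        ring
      · rw [Set.indicator_of_notMem (show x ∉ Iio (0:ℝ) from hx)]
        have hy : ∀ y : ℝ, C5.indicator W (x, y) = 0 := fun y =>
          Set.indicator_of_notMem (show (x,y) ∉ C5 by rw [hC5]; exact fun h => hx h.1) _
        simp_rw [hy]
        simp
    simp_rw [inner]
    rw [integral_indicator measurableSet_Iio, ← integral_Iic_eq_integral_Iio,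
      integral_mul_const, expIntIic (mu2+mu3) 0 (by linarith)]
    rw [mul_zero, Real.exp_zero]
    field_simp
  -- Piece 6
  have P6 : ∫ p : ℝ × ℝ, C6.indicator W p ∂(volume.prod volume)
      = 1/((mu2+mu3)*(Lam+mu2)) := by
    rw [integral_prod_symm _ i6]
    have inner : ∀ y : ℝ, (∫ x : ℝ, C6.indicator W (x, y))
        = (Ici (0:ℝ)).indicator (fun y => Real.exp (-((mu2+mu3)*y)) * (1/(Lam+mu2))) y := by
      intro y
      by_cases hy : 0 ≤ y
      · rw [Set.indicator_of_mem (show y ∈ Ici (0:ℝ) from hy)]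
        have hx : ∀ x : ℝ, C6.indicator W (x, y)
            = (Iio (-y)).indicator
              (fun x => Real.exp ((Lam+mu2)*x) * Real.exp ((Lam-mu3)*y)) x := by
          intro x
          by_cases hx : x < -y
          · rw [Set.indicator_of_mem (show (x,y) ∈ C6 by
                rw [hC6]; exact ⟨by linarith, hy, by linarith⟩),
              Set.indicator_of_mem (show x ∈ Iio (-y) from hx), hW]
            simp only
            rw [abs_of_neg (by linarith : x + y < 0), abs_of_nonneg hy,
              abs_of_neg (by linarith : x < 0),
              ← Real.exp_add, ← Real.exp_add, ← Real.exp_add]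
            ring_nf
          · rw [Set.indicator_of_notMem (show (x,y) ∉ C6 by
                rw [hC6]; intro h; exact hx (by linarith [h.2.2])),
              Set.indicator_of_notMem (show x ∉ Iio (-y) from hx)]
        simp_rw [hx]
        rw [integral_indicator measurableSet_Iio, ← integral_Iic_eq_integral_Iio,
          integral_mul_const, expIntIic (Lam+mu2) (-y) (by linarith)]
        rw [show (Lam+mu2) * -y = -((Lam+mu2)*y) by ring, div_mul_eq_mul_div, ← Real.exp_add,
          show -((Lam+mu2)*y) + (Lam-mu3)*y = -((mu2+mu3)*y) by ring]
        ring
      · rw [Set.indicator_of_notMem (show y ∉ Ici (0:ℝ) from hy)]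
        have hx : ∀ x : ℝ, C6.indicator W (x, y) = 0 := fun x =>
          Set.indicator_of_notMem (show (x,y) ∉ C6 by rw [hC6]; exact fun h => hy h.2.1) _
        simp_rw [hx]
        simp
    simp_rw [inner]
    rw [integral_indicator measurableSet_Ici, integral_Ici_eq_integral_Ioi,
      integral_mul_const, expInt (mu2+mu3) 0 (by linarith)]
    rw [mul_zero, neg_zero, Real.exp_zero]
    field_simp
  rw [P1, P2, P3, P4, P5, P6]
  have d1 : (Lam+mu2) ≠ 0 := by linarith
  have d2 : (Lam+mu3) ≠ 0 := by linarith
  have d3 : (mu2+mu3) ≠ 0 := by linarith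
  field_simp
  ring

lemma expAbsLamLe1 (Lam z : ℝ) (hL : 0 < Lam) : Real.exp (-(Lam * |z|)) ≤ 1 :=
  Real.exp_le_one_iff.mpr (neg_nonpos.mpr (by positivity))

lemma partB (Lam mu2 mu3 : ℝ) (hL : 0 < Lam) (h2 : 0 < mu2) (h3 : 0 < mu3) :
    (∫ u1 in Ioi (0:ℝ), ∫ u2 in Ioi (0:ℝ), ∫ v1 in Ioi (0:ℝ), ∫ v2 in Ioi (0:ℝ),
        Real.exp (-(Lam * |(u1 - u2) + (v1 - v2)|))
          * (mu2^2 * mu3^2 * Real.exp (-(mu2 * (u1 + u2))) * Real.exp (-(mu3 * (v1 + v2)))))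
    = (mu2*mu3/4) * (2/((Lam+mu2)*(Lam+mu3)) + 2/((mu2+mu3)*(Lam+mu2))
        + 2/((mu2+mu3)*(Lam+mu3))) := by
  set h2fun : ℝ → ℝ := fun x => (mu3/2) * ∫ y : ℝ,
    Real.exp (-(Lam * |x + y|)) * Real.exp (-(mu3 * |y|)) with hh2
  have hFcont : ∀ y : ℝ, Continuous fun x : ℝ =>
      Real.exp (-(Lam * |x + y|)) * Real.exp (-(mu3 * |y|)) := by
    intro y; fun_prop
  have hFbd : ∀ x y : ℝ, ‖Real.exp (-(Lam * |x + y|)) * Real.exp (-(mu3 * |y|))‖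
      ≤ Real.exp (-(mu3 * |y|)) := by
    intro x y
    rw [Real.norm_eq_abs, abs_of_nonneg (by positivity)]
    calc Real.exp (-(Lam * |x + y|)) * Real.exp (-(mu3 * |y|))
        ≤ 1 * Real.exp (-(mu3 * |y|)) :=
          mul_le_mul_of_nonneg_right (expAbsLamLe1 Lam _ hL) (Real.exp_pos _).le
      _ = Real.exp (-(mu3 * |y|)) := one_mul _
  have hIcont : Continuous fun x : ℝ => ∫ y : ℝ,
      Real.exp (-(Lam * |x + y|)) * Real.exp (-(mu3 * |y|)) := by
    apply continuous_of_dominated (bound := fun y : ℝ => Real.exp (-(mu3 * |y|)))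
    · intro x
      apply Continuous.aestronglyMeasurable
      fun_prop
    · intro x
      exact Filter.Eventually.of_forall (hFbd x)
    · exact absExpIntegrable mu3 h3
    · exact Filter.Eventually.of_forall (fun y => hFcont y)
  have hcont2 : Continuous h2fun := by
    rw [hh2]; exact continuous_const.mul hIcont
  have hbnd2 : ∀ x : ℝ, |h2fun x| ≤ 1 := by
    intro x
    rw [hh2]
    simp only
    rw [abs_mul, abs_of_nonneg (by positivity : (0:ℝ) ≤ mu3/2)]
    have hle : |∫ y : ℝ, Real.exp (-(Lam * |x + y|)) * Real.exp (-(mu3 * |y|))| ≤ 2/mu3 := by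
      rw [← Real.norm_eq_abs]
      have := norm_integral_le_of_norm_le (absExpIntegrable mu3 h3)
        (Filter.Eventually.of_forall (hFbd x))
      rwa [absExpVal mu3 h3] at this
    calc mu3/2 * |∫ y : ℝ, Real.exp (-(Lam * |x + y|)) * Real.exp (-(mu3 * |y|))|
        ≤ mu3/2 * (2/mu3) := mul_le_mul_of_nonneg_left hle (by positivity)
      _ = 1 := by field_simp
  -- inner double integral via L1
  have hinner : ∀ x : ℝ, (∫ v1 in Ioi (0:ℝ), ∫ v2 in Ioi (0:ℝ),
      Real.exp (-(Lam * |x + (v1 - v2)|)) * (mu3^2 * Real.exp (-(mu3*(v1+v2)))))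
      = h2fun x := by
    intro x
    exact L1 mu3 h3 (fun y => Real.exp (-(Lam * |x + y|))) (by fun_prop)
      (fun y => by rw [abs_of_pos (Real.exp_pos _)]; exact expAbsLamLe1 Lam _ hL)
  -- reduce quadruple integral
  have hstep : ∀ u1 ∈ Ioi (0:ℝ), (∫ u2 in Ioi (0:ℝ), ∫ v1 in Ioi (0:ℝ), ∫ v2 in Ioi (0:ℝ),
      Real.exp (-(Lam * |(u1 - u2) + (v1 - v2)|))
        * (mu2^2 * mu3^2 * Real.exp (-(mu2 * (u1 + u2))) * Real.exp (-(mu3 * (v1 + v2)))))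
      = ∫ u2 in Ioi (0:ℝ), h2fun (u1 - u2) * (mu2^2 * Real.exp (-(mu2*(u1+u2)))) := by
    intro u1 _
    apply setIntegral_congr_fun measurableSet_Ioi
    intro u2 _
    simp only
    have e1 : ∀ v1 v2 : ℝ, Real.exp (-(Lam * |(u1 - u2) + (v1 - v2)|))
        * (mu2^2 * mu3^2 * Real.exp (-(mu2 * (u1 + u2))) * Real.exp (-(mu3 * (v1 + v2))))
        = (Real.exp (-(Lam * |(u1 - u2) + (v1 - v2)|)) * (mu3^2 * Real.exp (-(mu3*(v1+v2)))))
          * (mu2^2 * Real.exp (-(mu2*(u1+u2)))) := by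
      intro v1 v2; ring
    simp_rw [e1, integral_mul_const]
    rw [hinner (u1 - u2)]
  rw [setIntegral_congr_fun measurableSet_Ioi hstep,
    L1 mu2 h2 h2fun hcont2 hbnd2]
  have e2 : ∀ x : ℝ, h2fun x * Real.exp (-(mu2 * |x|))
      = (mu3/2) * ((∫ y : ℝ, Real.exp (-(Lam * |x + y|)) * Real.exp (-(mu3 * |y|)))
          * Real.exp (-(mu2 * |x|))) := by
    intro x; rw [hh2]; ring
  simp_rw [e2]
  rw [integral_const_mul, Jval Lam mu2 mu3 hL h2 h3]
  ring

/-- When both mRNA and protein lifetimes are exponential (parameters `μ₂`, `μ₃`), the general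
integral formula for the variance of the number of proteins at equilibrium reduces to the
classical closed form `var_E(P)`. -/
theorem protein_variance_all_exponential
    (lam1p lam1m lam2 lam3 mu2 mu3 : ℝ)
    (h1p : 0 < lam1p) (h1m : 0 < lam1m) (h2 : 0 < lam2) (h3 : 0 < lam3)
    (hmu2 : 0 < mu2) (hmu3 : 0 < mu3)
    (Lam : ℝ) (hLam : Lam = lam1p + lam1m)
    (delta : ℝ) (hdelta : delta = lam1p / Lam)
    (rho2 : ℝ) (hrho2 : rho2 = lam2 / mu2)
    (rho3 : ℝ) (hrho3 : rho3 = lam3 / mu3)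
    (EP : ℝ) (hEP : EP = delta * rho2 * rho3) :
    EP
      + lam2 * rho3 ^ 2 * delta *
        (∫ t in Set.Ioi (0 : ℝ),
          (∫ s in Set.Ioi (0 : ℝ),
            (Real.exp (-(mu3 * max (s - t) 0)) - Real.exp (-(mu3 * s))) ^ 2)
            * (mu2 * Real.exp (-(mu2 * t))))
      + rho2 ^ 2 * rho3 ^ 2 * delta * (1 - delta) *
        (∫ u1 in Set.Ioi (0 : ℝ), ∫ u2 in Set.Ioi (0 : ℝ),
          ∫ v1 in Set.Ioi (0 : ℝ), ∫ v2 in Set.Ioi (0 : ℝ),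
            Real.exp (-(Lam * |(u1 - u2) + (v1 - v2)|))
              * (mu2 ^ 2 * mu3 ^ 2 * Real.exp (-(mu2 * (u1 + u2)))
                  * Real.exp (-(mu3 * (v1 + v2)))))
    = EP * (1 + lam3 / (mu2 + mu3)
        + lam2 * lam3 * (1 - delta) * (Lam + mu2 + mu3)
            / ((mu2 + mu3) * (Lam + mu2) * (Lam + mu3))) := by
  have hL : 0 < Lam := by rw [hLam]; linarith
  rw [partA mu2 mu3 hmu2 hmu3, partB Lam mu2 mu3 hL hmu2 hmu3]
  subst hEP hrho2 hrho3 hdelta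
  have d0 : mu2 + mu3 ≠ 0 := by linarith
  have d1 : Lam + mu2 ≠ 0 := by linarith
  have d2 : Lam + mu3 ≠ 0 := by linarith
  field_simp
  ring
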